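/- Let m and r be positive integers. If the matching (m·r² + 1)K₂ has an r-lettering, then the matching mK₂ has a 2-lettering. -/

import Mathlib

/-- A `k`-lettering of a graph `G`: a decoder `D ⊆ Fin k × Fin k`, a letter
assignment `L`, and an injective ordering `ord` such that for `ord u < ord v`,
`u` and `v` are adjacent iff `(L u, L v) ∈ D`. -/
def HasLettering {V : Type*} (G : SimpleGraph V) (k : ℕ) : Prop :=
  ∃ (D : Set (Fin k × Fin k)) (L : V → Fin k) (ord : V → ℕ),
    Function.Injective ord ∧
    ∀ u v : V, u ≠ v → ord u < ord v → (G.Adj u v ↔ (L u, L v) ∈ D)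

/-- The lettericity of a graph: the least `k` such that it has a `k`-lettering. -/
noncomputable def lettericity {V : Type*} (G : SimpleGraph V) : ℕ :=
  sInf {k | HasLettering G k}

/-- The matching `mK₂`: the disjoint union of `m` single edges. -/
def matchingGraph (m : ℕ) : SimpleGraph (Fin m × Fin 2) where
  Adj a b := a.1 = b.1 ∧ a.2 ≠ b.2
  symm := ⟨by rintro a b ⟨h1, h2⟩; exact ⟨h1.symm, h2.symm⟩⟩
  loopless := ⟨by rintro a ⟨h1, h2⟩; exact h2 rfl⟩

/-- If the matching `(m·r² + 1)K₂` has an `r`-lettering, then the matching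
`mK₂` has a `2`-lettering. -/
theorem matching_lettering_reduction (m r : ℕ) (hm : 0 < m) (hr : 0 < r)
    (h : HasLettering (matchingGraph (m * r ^ 2 + 1)) r) :
    HasLettering (matchingGraph m) 2 := by
  obtain ⟨D, L, ord, hinj, hcond⟩ := h
  let s : Fin (m * r ^ 2 + 1) → Fin (m * r ^ 2 + 1) × Fin 2 := fun i =>
    if ord (i, 0) < ord (i, 1) then (i, 0) else (i, 1)
  let t : Fin (m * r ^ 2 + 1) → Fin (m * r ^ 2 + 1) × Fin 2 := fun i =>
    if ord (i, 0) < ord (i, 1) then (i, 1) else (i, 0)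
  have hs1 : ∀ i, (s i).1 = i := by
    intro i; simp only [s]; split <;> rfl
  have ht1 : ∀ i, (t i).1 = i := by
    intro i; simp only [t]; split <;> rfl
  have hst2 : ∀ i, (s i).2 ≠ (t i).2 := by
    intro i; simp only [s, t]; split <;> simp
  have hordst : ∀ i, ord (s i) < ord (t i) := by
    intro i; simp only [s, t]; split
    · assumption
    · rename_i hlt
      have hne : ord (i, (0 : Fin 2)) ≠ ord (i, 1) := by
        intro he; exact absurd (hinj he) (by simp)
      omega
  -- pigeonhole
  obtain ⟨p, -, hp⟩ := Finset.exists_lt_card_fiber_of_mul_lt_card_of_maps_to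
    (s := (Finset.univ : Finset (Fin (m * r ^ 2 + 1))))
    (t := (Finset.univ : Finset (Fin r × Fin r)))
    (f := fun i => (L (s i), L (t i))) (n := m) (fun a _ => Finset.mem_univ _)
    (by
      simp only [Finset.card_univ, Fintype.card_prod, Fintype.card_fin]
      have : r * r * m = m * r ^ 2 := by ring
      omega)
  obtain ⟨T, hTsub, hTcard⟩ := Finset.exists_subset_card_eq hp.le
  let e := T.orderIsoOfFin hTcard
  let c : Fin m → Fin (m * r ^ 2 + 1) := fun i => (e i : Fin (m * r ^ 2 + 1))
  have hcinj : Function.Injective c := by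
    intro a b hab
    exact e.injective (Subtype.ext hab)
  have hcp : ∀ i, (L (s (c i)), L (t (c i))) = p := by
    intro i
    have := hTsub (e i).2
    simpa [Prod.ext_iff] using (Finset.mem_filter.mp this).2
  let f : Fin m × Fin 2 → Fin (m * r ^ 2 + 1) × Fin 2 := fun x =>
    if x.2 = 0 then s (c x.1) else t (c x.1)
  have hf1 : ∀ x, (f x).1 = c x.1 := by
    intro x; simp only [f]; split
    · exact hs1 _
    · exact ht1 _
  have finj : Function.Injective f := by
    intro x y hxy
    have h1 : x.1 = y.1 := by
      have := congrArg Prod.fst hxy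
      rw [hf1, hf1] at this
      exact hcinj this
    have h2 : x.2 = y.2 := by
      by_contra hne
      simp only [f, h1] at hxy
      obtain ⟨x1, x2⟩ := x; obtain ⟨y1, y2⟩ := y
      simp only at hxy hne
      fin_cases x2 <;> fin_cases y2 <;> simp_all
      · exact hst2 (c y1) (congrArg Prod.snd hxy)
      · exact hst2 (c y1) (congrArg Prod.snd hxy).symm
    exact Prod.ext h1 h2
  let g : Fin 2 → Fin r := ![p.1, p.2]
  have hLf : ∀ x, L (f x) = g x.2 := by
    intro x
    have hq := hcp x.1
    rw [Prod.ext_iff] at hq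
    obtain ⟨x1, x2⟩ := x
    simp only [f, g]
    fin_cases x2 <;> simp_all
  have hadj : ∀ x y : Fin m × Fin 2, (matchingGraph m).Adj x y ↔
      (matchingGraph (m * r ^ 2 + 1)).Adj (f x) (f y) := by
    intro x y
    constructor
    · rintro ⟨h1, h2⟩
      refine ⟨by rw [hf1, hf1, h1], ?_⟩
      simp only [f, h1]
      obtain ⟨x1, x2⟩ := x; obtain ⟨y1, y2⟩ := y
      simp only at h2 ⊢
      fin_cases x2 <;> fin_cases y2 <;> simp_all
      exact fun he => hst2 _ he.symm
    · rintro ⟨h1, h2⟩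
      rw [hf1, hf1] at h1
      have h1' := hcinj h1
      refine ⟨h1', ?_⟩
      intro he
      apply h2
      have hfe : f x = f y := by
        simp only [f, h1', he]
      rw [hfe]
  refine ⟨{q | (g q.1, g q.2) ∈ D}, Prod.snd, ord ∘ f, hinj.comp finj, ?_⟩
  intro u v huv hlt
  rw [hadj]
  have := hcond (f u) (f v) (fun he => huv (finj he)) hlt
  rw [this]
  simp only [Set.mem_setOf_eq, hLf]
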